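/- Key inequality for bilinear sharpness: for H = [[0, Aᵀ],[A, 0]] ∈ ℝ^{(n+m)×(n+m)} and z = (x,y), ‖Hz − (c,b)‖₂² = ‖Aᵀy − c‖₂² + ‖Ax − b‖₂² ≥ σ_min⁺(A)²·dist(z, Z*)², where Z* = {z : Hz = (c,b)} is assumed nonempty. -/

import Mathlib

open scoped Matrix

/-- The minimum nonzero singular value of a real matrix `A`. -/
noncomputable def sigmaMinPos {m n : Type*} [Fintype m] [Fintype n] [DecidableEq n]
    (H : Matrix m n ℝ) : ℝ :=
  Real.sqrt (sInf {μ : ℝ | μ ≠ 0 ∧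
    ∃ i, (Matrix.isHermitian_conjTranspose_mul_self H).eigenvalues i = μ})


lemma toEL_eig {ι : Type*} [Fintype ι] [DecidableEq ι] {M : Matrix ι ι ℝ} (hM : M.IsHermitian) (j : ι) :
    Matrix.toEuclideanLin M (hM.eigenvectorBasis j) = hM.eigenvalues j • hM.eigenvectorBasis j := by
  ext i
  have := congrFun (hM.mulVec_eigenvectorBasis j) i
  simpa [Matrix.toEuclideanLin_apply] using this

lemma repr_toEL {ι : Type*} [Fintype ι] [DecidableEq ι] {M : Matrix ι ι ℝ} (hM : M.IsHermitian)
    (w : EuclideanSpace ℝ ι) (i : ι) :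
    hM.eigenvectorBasis.repr (Matrix.toEuclideanLin M w) i
      = hM.eigenvalues i * hM.eigenvectorBasis.repr w i := by
  set B := hM.eigenvectorBasis with hB
  have step : Matrix.toEuclideanLin M w
      = ∑ j, (B.repr w j * hM.eigenvalues j) • B j := by
    conv_lhs => rw [← B.sum_repr w, map_sum]
    refine Finset.sum_congr rfl fun j _ => ?_
    rw [map_smul, toEL_eig hM, smul_smul]
  rw [step, map_sum]
  have : ∀ j, B.repr ((B.repr w j * hM.eigenvalues j) • B j)
      = (B.repr w j * hM.eigenvalues j) • EuclideanSpace.single j (1:ℝ) := by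
    intro j; rw [map_smul, B.repr_self]
  rw [Finset.sum_congr rfl fun j _ => this j]
  have ev : ∀ j, ((B.repr w j * hM.eigenvalues j) • EuclideanSpace.single j (1:ℝ)) i
      = if j = i then B.repr w j * hM.eigenvalues j else 0 := by
    intro j
    by_cases h : j = i
    · simp [EuclideanSpace.single_apply, h]
    · simp [EuclideanSpace.single_apply, h, Ne.symm h]
  calc (∑ j, (B.repr w j * hM.eigenvalues j) • EuclideanSpace.single j (1:ℝ)) i
      = ∑ j, ((B.repr w j * hM.eigenvalues j) • EuclideanSpace.single j (1:ℝ)) i := by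
        rw [WithLp.ofLp_sum]; exact Finset.sum_apply i Finset.univ _
    _ = hM.eigenvalues i * B.repr w i := by
        rw [Finset.sum_congr rfl fun j _ => ev j]
        simp [mul_comm]

lemma esq {ι : Type*} [Fintype ι] (w : EuclideanSpace ℝ ι) : ‖w‖^2 = ∑ i, (w i)^2 := by
  rw [EuclideanSpace.norm_eq, Real.sq_sqrt (by positivity)]
  simp [sq_abs]

lemma exists_eig {ι : Type*} [Fintype ι] [DecidableEq ι] {M : Matrix ι ι ℝ} (hM : M.IsHermitian)
    {μ : ℝ} {v : ι → ℝ} (hv : v ≠ 0) (heq : M *ᵥ v = μ • v) :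
    ∃ i, hM.eigenvalues i = μ := by
  by_contra hcon
  push_neg at hcon
  set w : EuclideanSpace ℝ ι := (WithLp.equiv 2 _).symm v with hw
  have hTw : Matrix.toEuclideanLin M w = μ • w := by
    rw [hw, WithLp.equiv_symm_apply, Matrix.toEuclideanLin_apply_piLp_toLp, heq]
    rfl
  have hz : ∀ i, hM.eigenvectorBasis.repr w i = 0 := by
    intro i
    have h1 := repr_toEL hM w i
    rw [hTw, map_smul] at h1
    have h2 : (hM.eigenvalues i - μ) * hM.eigenvectorBasis.repr w i = 0 := by
      simp only [PiLp.smul_apply, smul_eq_mul] at h1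
      ring_nf
      ring_nf at h1
      linarith
    rcases mul_eq_zero.mp h2 with h | h
    · exact absurd (by linarith) (hcon i)
    · exact h
  have : w = 0 := by
    have : hM.eigenvectorBasis.repr w = 0 := by
      ext i; exact hz i
    simpa using congrArg hM.eigenvectorBasis.repr.symm this
  exact hv (by simpa [hw] using congrArg (WithLp.equiv 2 (ι → ℝ)) this)

lemma spectral_bound {ι : Type*} [Fintype ι] [DecidableEq ι] {M : Matrix ι ι ℝ}
    (hM : M.IsHermitian) {s : ℝ} (hs : 0 ≤ s)
    (hb : ∀ i, hM.eigenvalues i ≠ 0 → s ≤ (hM.eigenvalues i)^2) (u : EuclideanSpace ℝ ι) :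
    ∃ k, Matrix.toEuclideanLin M k = 0 ∧ s * ‖u - k‖^2 ≤ ‖Matrix.toEuclideanLin M u‖^2 := by
  classical
  set B := hM.eigenvectorBasis with hB
  set k : EuclideanSpace ℝ ι :=
    ∑ j ∈ Finset.univ.filter (fun j => hM.eigenvalues j = 0), B.repr u j • B j with hk
  have hTk : Matrix.toEuclideanLin M k = 0 := by
    rw [hk, map_sum]
    refine Finset.sum_eq_zero fun j hj => ?_
    rw [map_smul, toEL_eig hM, (Finset.mem_filter.mp hj).2]
    simp
  have hreprk : ∀ i, B.repr k i = if hM.eigenvalues i = 0 then B.repr u i else 0 := by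
    intro i
    rw [hk, map_sum]
    have ev : ∀ j, B.repr (B.repr u j • B j) i
        = if j = i then B.repr u j else 0 := by
      intro j
      rw [map_smul, B.repr_self]
      by_cases h : j = i
      · simp [EuclideanSpace.single_apply, h]
      · simp [EuclideanSpace.single_apply, h, Ne.symm h]
    rw [WithLp.ofLp_sum, Finset.sum_apply i _ _, Finset.sum_congr rfl fun j _ => ev j]
    by_cases h : hM.eigenvalues i = 0 <;> simp [Finset.sum_ite_eq, h]
  refine ⟨k, hTk, ?_⟩
  have h1 : ‖u - k‖^2 = ∑ i, (if hM.eigenvalues i = 0 then 0 else B.repr u i)^2 := by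
    rw [← B.repr.norm_map (u - k), esq]
    refine Finset.sum_congr rfl fun i _ => ?_
    rw [map_sub]
    simp only [PiLp.sub_apply]
    rw [hreprk i]
    by_cases h : hM.eigenvalues i = 0 <;> simp [h]
  have h2 : ‖Matrix.toEuclideanLin M u‖^2 = ∑ i, (hM.eigenvalues i * B.repr u i)^2 := by
    rw [← B.repr.norm_map, esq]
    exact Finset.sum_congr rfl fun i _ => by rw [repr_toEL hM]
  rw [h1, h2, Finset.mul_sum]
  refine Finset.sum_le_sum fun i _ => ?_
  by_cases h : hM.eigenvalues i = 0
  · simp [h]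
  · simp only [h, if_neg, ite_false]
    rw [mul_pow]
    have := hb i h
    nlinarith [sq_nonneg (B.repr u i)]


/-- For `H = [[0, Aᵀ],[A, 0]]` and `z = (x,y)`,
`‖Hz − (c,b)‖₂² = ‖Aᵀy − c‖₂² + ‖Ax − b‖₂² ≥ σ_min⁺(A)² · dist(z, Z*)²`, where
`Z* = {z : Hz = (c,b)}` is assumed nonempty. -/
theorem bilinear_residual_ge_sharp_dist {n m : ℕ} (A : Matrix (Fin m) (Fin n) ℝ)
    (c : EuclideanSpace ℝ (Fin n)) (b : EuclideanSpace ℝ (Fin m))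
    (H : Matrix (Fin n ⊕ Fin m) (Fin n ⊕ Fin m) ℝ)
    (hH : H = Matrix.fromBlocks 0 Aᵀ A 0)
    (cb : EuclideanSpace ℝ (Fin n ⊕ Fin m))
    (hcb : cb = (EuclideanSpace.equiv (Fin n ⊕ Fin m) ℝ).symm (Sum.elim c b))
    (Zstar : Set (EuclideanSpace ℝ (Fin n ⊕ Fin m)))
    (hZstar : Zstar = {w | Matrix.toEuclideanLin H w = cb})
    (hne : Zstar.Nonempty)
    (z : EuclideanSpace ℝ (Fin n ⊕ Fin m))
    (x : EuclideanSpace ℝ (Fin n)) (hx : x = (EuclideanSpace.equiv (Fin n) ℝ).symm (fun i => z (Sum.inl i)))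
    (y : EuclideanSpace ℝ (Fin m)) (hy : y = (EuclideanSpace.equiv (Fin m) ℝ).symm (fun j => z (Sum.inr j))) :
    ‖Matrix.toEuclideanLin H z - cb‖ ^ 2 =
      ‖Matrix.toEuclideanLin Aᵀ y - c‖ ^ 2 + ‖Matrix.toEuclideanLin A x - b‖ ^ 2 ∧
    sigmaMinPos A ^ 2 * Metric.infDist z Zstar ^ 2 ≤
      ‖Matrix.toEuclideanLin Aᵀ y - c‖ ^ 2 + ‖Matrix.toEuclideanLin A x - b‖ ^ 2 := by
  classical
  -- components of z
  have hxz : ∀ i, x i = z (Sum.inl i) := by subst hx; intro i; rfl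
  have hyz : ∀ j, y j = z (Sum.inr j) := by subst hy; intro j; rfl
  have hcbl : ∀ i, cb (Sum.inl i) = c i := by subst hcb; intro i; rfl
  have hcbr : ∀ j, cb (Sum.inr j) = b j := by subst hcb; intro j; rfl
  -- component computation of H z
  have hHz : ∀ w : EuclideanSpace ℝ (Fin n ⊕ Fin m),
      (∀ i, (Matrix.toEuclideanLin H w) (Sum.inl i) = (Aᵀ *ᵥ fun j => w (Sum.inr j)) i) ∧
      (∀ j, (Matrix.toEuclideanLin H w) (Sum.inr j) = (A *ᵥ fun i => w (Sum.inl i)) j) := by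
    intro w
    have base : ∀ s, (Matrix.toEuclideanLin H w) s = (H *ᵥ fun t => w t) s := fun s => rfl
    constructor
    · intro i
      rw [base, hH, Matrix.fromBlocks_mulVec]
      simp only [Matrix.zero_mulVec, zero_add, add_zero, Sum.elim_inl]
      rfl
    · intro j
      rw [base, hH, Matrix.fromBlocks_mulVec]
      simp only [Matrix.zero_mulVec, zero_add, add_zero, Sum.elim_inr]
      rfl
  -- the equality part
  have comp1 : ∀ i, (Matrix.toEuclideanLin H z - cb) (Sum.inl i)
      = (Matrix.toEuclideanLin Aᵀ y - c) i := by
    intro i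
    simp only [PiLp.sub_apply]
    rw [(hHz z).1 i, hcbl i]
    congr 1
    have : (Matrix.toEuclideanLin Aᵀ y) i = (Aᵀ *ᵥ fun j => y j) i := rfl
    rw [this]
    congr 1
    exact funext fun j => (hyz j).symm
  have comp2 : ∀ j, (Matrix.toEuclideanLin H z - cb) (Sum.inr j)
      = (Matrix.toEuclideanLin A x - b) j := by
    intro j
    simp only [PiLp.sub_apply]
    rw [(hHz z).2 j, hcbr j]
    congr 1
    have : (Matrix.toEuclideanLin A x) j = (A *ᵥ fun i => x i) j := rfl
    rw [this]
    congr 1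
    exact funext fun i => (hxz i).symm
  have eqpart : ‖Matrix.toEuclideanLin H z - cb‖ ^ 2 =
      ‖Matrix.toEuclideanLin Aᵀ y - c‖ ^ 2 + ‖Matrix.toEuclideanLin A x - b‖ ^ 2 := by
    rw [esq, esq, esq, Fintype.sum_sum_type]
    congr 1
    · exact Finset.sum_congr rfl fun i _ => by rw [comp1 i]
    · exact Finset.sum_congr rfl fun j _ => by rw [comp2 j]
  refine ⟨eqpart, ?_⟩
  -- Hermitian-ness of H
  have hH' : H.IsHermitian := by
    rw [Matrix.IsHermitian, Matrix.conjTranspose_eq_transpose_of_trivial, hH,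
      Matrix.fromBlocks_transpose]
    simp
  set S : Set ℝ := {μ : ℝ | μ ≠ 0 ∧
    ∃ i, (Matrix.isHermitian_conjTranspose_mul_self A).eigenvalues i = μ} with hS
  have hSsub : S ⊆ Set.range (Matrix.isHermitian_conjTranspose_mul_self A).eigenvalues := by
    rintro μ ⟨-, i, rfl⟩; exact Set.mem_range_self i
  have hbdd : BddBelow S := (Set.finite_range _).subset hSsub |>.bddBelow
  have hs : 0 ≤ sInf S := by
    refine Real.sInf_nonneg fun μ hμ => ?_
    obtain ⟨-, i, rfl⟩ := hμ
    exact (Matrix.posSemidef_conjTranspose_mul_self A).eigenvalues_nonneg i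
  -- eigenvalue transfer
  have hb : ∀ i, hH'.eigenvalues i ≠ 0 → sInf S ≤ (hH'.eigenvalues i)^2 := by
    intro i hν
    set ν := hH'.eigenvalues i with hνdef
    set e := hH'.eigenvectorBasis i with he
    have hHmv : ∀ v : (Fin n ⊕ Fin m) → ℝ,
        H *ᵥ v = Sum.elim (Aᵀ *ᵥ (v ∘ Sum.inr)) (A *ᵥ (v ∘ Sum.inl)) := by
      intro v
      rw [hH, Matrix.fromBlocks_mulVec]
      simp
    have hmv := hH'.mulVec_eigenvectorBasis i
    rw [hHmv] at hmv
    set p : Fin n → ℝ := fun a => e (Sum.inl a) with hp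
    set q : Fin m → ℝ := fun a => e (Sum.inr a) with hq
    have hATq : Aᵀ *ᵥ q = ν • p := by
      funext a
      have := congrFun hmv (Sum.inl a)
      exact this
    have hAp : A *ᵥ p = ν • q := by
      funext a
      have := congrFun hmv (Sum.inr a)
      exact this
    have hMp : (Aᴴ * A) *ᵥ p = (ν^2) • p := by
      rw [Matrix.conjTranspose_eq_transpose_of_trivial, ← Matrix.mulVec_mulVec, hAp,
        Matrix.mulVec_smul, hATq, smul_smul, ← sq]
    have hpne : p ≠ 0 := by
      intro h0
      have hq0 : q = 0 := by
        have : ν • q = 0 := by rw [← hAp, h0, Matrix.mulVec_zero]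
        exact (smul_eq_zero.mp this).resolve_left hν
      have : e = 0 := by
        ext s
        cases s with
        | inl a => exact congrFun h0 a
        | inr a => exact congrFun hq0 a
      exact hH'.eigenvectorBasis.orthonormal.ne_zero i this
    obtain ⟨i', hi'⟩ := exists_eig (Matrix.isHermitian_conjTranspose_mul_self A) hpne hMp
    exact csInf_le hbdd ⟨pow_ne_zero 2 hν, i', hi'⟩
  -- put it together
  obtain ⟨z₀, hz₀⟩ := hne
  have hz₀' : Matrix.toEuclideanLin H z₀ = cb := by rwa [hZstar] at hz₀
  obtain ⟨k, hTk, hineq⟩ := spectral_bound hH' hs hb (z - z₀)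
  have hmem : z₀ + k ∈ Zstar := by
    rw [hZstar]
    show Matrix.toEuclideanLin H (z₀ + k) = cb
    rw [map_add, hz₀', hTk, add_zero]
  have hdist : Metric.infDist z Zstar ≤ ‖z - z₀ - k‖ := by
    have := Metric.infDist_le_dist_of_mem (x := z) hmem
    rwa [dist_eq_norm, sub_add_eq_sub_sub] at this
  have hd2 : Metric.infDist z Zstar ^ 2 ≤ ‖z - z₀ - k‖ ^ 2 :=
    pow_le_pow_left₀ (Metric.infDist_nonneg) hdist 2
  have hσ : sigmaMinPos A ^ 2 = sInf S := Real.sq_sqrt hs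
  have hTu : Matrix.toEuclideanLin H (z - z₀) = Matrix.toEuclideanLin H z - cb := by
    rw [map_sub, hz₀']
  calc sigmaMinPos A ^ 2 * Metric.infDist z Zstar ^ 2
      = sInf S * Metric.infDist z Zstar ^ 2 := by rw [hσ]
    _ ≤ sInf S * ‖z - z₀ - k‖ ^ 2 := by
        exact mul_le_mul_of_nonneg_left hd2 hs
    _ ≤ ‖Matrix.toEuclideanLin H (z - z₀)‖ ^ 2 := hineq
    _ = ‖Matrix.toEuclideanLin H z - cb‖ ^ 2 := by rw [hTu]
    _ = _ := eqpart
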